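/- The q-Weyl coefficients satisfy both affine coequivariance conditions: for every N ≥ 1, n ≥ 1 and Γ̃ = (Γ₁,…,Γ_n) ∈ (Y⁺_{≤N})ⁿ, the identity Σ_{Γ̃' ∈ (Y⁺_{≤N})ⁿ} Σ_{σ ∈ S_n} (A_{Γ₁,Γ'₁}⋯A_{Γ_n,Γ'_n}) ⊗ C_{Γ̃'}(σ)·ℏ_{Γ'_{σ(1)}}⋯ℏ_{Γ'_{σ(n)}} = Σ_{Γ̃' ∈ (Y⁺_{≤N})ⁿ} Σ_{σ ∈ S_n} C_{Γ̃}(σ)·(A_{Γ_{σ(1)},Γ'₁}⋯A_{Γ_{σ(n)},Γ'_n}) ⊗ ℏ_{Γ'₁}⋯ℏ_{Γ'_n} holds in 𝕄 ⊗_K E_{≤N}, and the identity Σ_{Γ̃' ∈ (Y⁺_{≤N})ⁿ} Σ_{σ ∈ S_n} C_{Γ̃'}(σ)·ℏ_{Γ'_{σ(1)}}⋯ℏ_{Γ'_{σ(n)}} ⊗ (A_{Γ'₁,Γ₁}⋯A_{Γ'_n,Γ_n}) = Σ_{Γ̃' ∈ (Y⁺_{≤N})ⁿ} Σ_{σ ∈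 S_n} C_{Γ̃}(σ)·ℏ_{Γ'₁}⋯ℏ_{Γ'_n} ⊗ (A_{Γ'₁,Γ_{σ(1)}}⋯A_{Γ'_n,Γ_{σ(n)}}) holds in E_{≤N} ⊗_K 𝕄. -/

import Mathlib

open scoped Classical

noncomputable section

namespace NC

/-- Number of leaves of a planar binary tree. -/
def leaves {α : Type*} : FreeMagma α → ℕ
  | .of _ => 1
  | .mul a b => leaves a + leaves b

/-- The list of leaf labels of a planar binary tree, read left to right. -/
def leafList {α : Type*} : FreeMagma α → List α
  | .of i => [i]
  | .mul a b => leafList a ++ leafList b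

/-- Planar binary trees with leaves labelled in `Fin (2*d)`. -/
abbrev M (d : ℕ) := FreeMagma (Fin (2 * d))

/-- The strict order `≺` on labelled planar binary trees. -/
def mlt {d : ℕ} : M d → M d → Prop
  | .of i, .of j => i < j
  | .of _, .mul _ _ => True
  | .mul _ _, .of _ => False
  | .mul a b, .mul c e =>
      leaves (FreeMagma.mul a b) < leaves (FreeMagma.mul c e) ∨
        (leaves (FreeMagma.mul a b) = leaves (FreeMagma.mul c e) ∧
          (mlt a c ∨ (a = c ∧ mlt b e)))

/-- `a ⪰ b`. -/
def mge {d : ℕ} (a b : M d) : Prop := mlt b a ∨ a = b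

/-- The set `Y⁺` of admissible trees. -/
inductive Yplus {d : ℕ} : M d → Prop
  | of (i : Fin (2 * d)) : Yplus (FreeMagma.of i)
  | mul {a b : M d} : Yplus a → Yplus b → mlt a b → Yplus (a * b)

abbrev Yp (d : ℕ) := {Γ : M d // Yplus Γ}

variable {d : ℕ} {K : Type*} [CommRing K]

/-- Extension of `q` to pairs of trees. -/
def qT (q : Fin (2 * d) → Fin (2 * d) → Kˣ) (Γ Γ' : M d) : Kˣ :=
  ((leafList Γ).map fun i => ((leafList Γ').map fun j => q i j).prod).prod

/-- Defining relations of the bracketing (epoché) algebra. -/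
inductive Erel (q : Fin (2 * d) → Fin (2 * d) → Kˣ) :
    FreeAlgebra K (M d) → FreeAlgebra K (M d) → Prop
  | rel (Γ Γ' : M d) :
      Erel q (FreeAlgebra.ι K Γ * FreeAlgebra.ι K Γ')
        (((qT q Γ' Γ : Kˣ) : K) • (FreeAlgebra.ι K Γ' * FreeAlgebra.ι K Γ)
          + FreeAlgebra.ι K (Γ * Γ'))

/-- The bracketing (epoché) algebra `E`. -/
abbrev E (q : Fin (2 * d) → Fin (2 * d) → Kˣ) := RingQuot (Erel (K := K) q)

/-- The noncommutative Planck constants `ℏ_Γ`. -/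
def hbar (q : Fin (2 * d) → Fin (2 * d) → Kˣ) (Γ : M d) : E q :=
  RingQuot.mkAlgHom K (Erel q) (FreeAlgebra.ι K Γ)

/-- Defining relations of the classical shadow. -/
inductive Arel (q : Fin (2 * d) → Fin (2 * d) → Kˣ) :
    FreeAlgebra K (Yp d) → FreeAlgebra K (Yp d) → Prop
  | rel (Γ Γ' : Yp d) :
      Arel q (FreeAlgebra.ι K Γ * FreeAlgebra.ι K Γ')
        (((qT q Γ'.1 Γ.1 : Kˣ) : K) • (FreeAlgebra.ι K Γ' * FreeAlgebra.ι K Γ))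

/-- The classical shadow `A`. -/
abbrev A (q : Fin (2 * d) → Fin (2 * d) → Kˣ) := RingQuot (Arel (K := K) q)

/-- The generators `h_Γ` of the classical shadow. -/
def hA (q : Fin (2 * d) → Fin (2 * d) → Kˣ) (Γ : Yp d) : A q :=
  RingQuot.mkAlgHom K (Arel q) (FreeAlgebra.ι K Γ)

/-- A weakly decreasing list of trees: `Γ₁ ⪰ Γ₂ ⪰ … ⪰ Γ_n`. -/
def DecChain {d : ℕ} (l : List (Yp d)) : Prop := l.Chain' fun a b => mge a.1 b.1

/-- Total degree of a list of trees. -/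
def degList {d : ℕ} (l : List (M d)) : ℕ := (l.map fun Γ => leaves Γ - 1).sum

/-- The decreasing filtration `F` on `E`. -/
def Ffil (q : Fin (2 * d) → Fin (2 * d) → Kˣ) (n : ℕ) : Submodule K (E q) :=
  Submodule.span K {x | ∃ l : List (M d), n ≤ degList l ∧ x = (l.map (hbar q)).prod}

/-- Homogeneous component of degree `D` of the classical shadow. -/
def Adeg (q : Fin (2 * d) → Fin (2 * d) → Kˣ) (D : ℕ) : Submodule K (A q) :=
  Submodule.span K {x | ∃ l : List (Yp d),
    DecChain l ∧ degList (l.map (·.1)) = D ∧ x = (l.map (hA q)).prod}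

/-- The braiding coefficient `q(Γ̃, σ)`. -/
def qPerm (q : Fin (2 * d) → Fin (2 * d) → Kˣ) {n : ℕ} (Γ : Fin n → M d)
    (σ : Equiv.Perm (Fin n)) : Kˣ :=
  ∏ p ∈ Finset.univ.filter
      (fun p : Fin n × Fin n => p.1 < p.2 ∧ σ.symm p.2 < σ.symm p.1),
    qT q (Γ p.1) (Γ p.2)

/-- The partition function `Z_n(Γ̃)`. -/
def Zfun (q : Fin (2 * d) → Fin (2 * d) → Kˣ) {n : ℕ} (Γ : Fin n → M d) : K :=
  ∑ σ : Equiv.Perm (Fin n), ((qPerm q Γ σ : Kˣ) : K) ^ 2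

/-- Defining relations of the quantum-matrix algebra `𝕄`. -/
inductive Mrel (q : Fin (2 * d) → Fin (2 * d) → Kˣ) :
    FreeAlgebra K (Yp d × Yp d) → FreeAlgebra K (Yp d × Yp d) → Prop
  | rel1 (Γ₁ Γ₂ Γ₁' Γ₂' : Yp d) :
      Mrel q
        (FreeAlgebra.ι K (Γ₂, Γ₁') * FreeAlgebra.ι K (Γ₁, Γ₂') +
          ((qT q Γ₁'.1 Γ₂'.1 : Kˣ) : K) •
            (FreeAlgebra.ι K (Γ₂, Γ₂') * FreeAlgebra.ι K (Γ₁, Γ₁')))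
        (((qT q Γ₁.1 Γ₂.1 : Kˣ) : K) •
          (FreeAlgebra.ι K (Γ₁, Γ₁') * FreeAlgebra.ι K (Γ₂, Γ₂') +
            ((qT q Γ₁'.1 Γ₂'.1 : Kˣ) : K) •
              (FreeAlgebra.ι K (Γ₁, Γ₂') * FreeAlgebra.ι K (Γ₂, Γ₁'))))
  | rel2 (Γ₁ Γ₂ Γ₁' Γ₂' : Yp d) :
      Mrel q
        (FreeAlgebra.ι K (Γ₁, Γ₂') * FreeAlgebra.ι K (Γ₂, Γ₁') +
          ((qT q Γ₁.1 Γ₂.1 : Kˣ) : K) •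
            (FreeAlgebra.ι K (Γ₂, Γ₂') * FreeAlgebra.ι K (Γ₁, Γ₁')))
        (((qT q Γ₁'.1 Γ₂'.1 : Kˣ) : K) •
          (FreeAlgebra.ι K (Γ₁, Γ₁') * FreeAlgebra.ι K (Γ₂, Γ₂') +
            ((qT q Γ₁.1 Γ₂.1 : Kˣ) : K) •
              (FreeAlgebra.ι K (Γ₂, Γ₁') * FreeAlgebra.ι K (Γ₁, Γ₂'))))

/-- The quantum-matrix algebra `𝕄`. -/
abbrev Mq (q : Fin (2 * d) → Fin (2 * d) → Kˣ) := RingQuot (Mrel (K := K) q)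

/-- The generators `A_{Γ,Γ'}` of `𝕄`. -/
def Amat (q : Fin (2 * d) → Fin (2 * d) → Kˣ) (Γ Γ' : Yp d) : Mq q :=
  RingQuot.mkAlgHom K (Mrel q) (FreeAlgebra.ι K (Γ, Γ'))

/-- `L_n(Γ̃,Γ̃') = Σ_{κ} q(Γ̃',κ)·A_{Γ₁,Γ'_{κ(1)}}⋯A_{Γ_n,Γ'_{κ(n)}}`. -/
def Lfun (q : Fin (2 * d) → Fin (2 * d) → Kˣ) {n : ℕ} (Γ Γ' : Fin n → Yp d) :
    Mq (K := K) q :=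
  ∑ κ : Equiv.Perm (Fin n),
    ((qPerm q (fun i => (Γ' i).1) κ : Kˣ) : K) •
      (List.ofFn fun i => Amat q (Γ i) (Γ' (κ i))).prod

/-- `R_n(Γ̃,Γ̃') = Σ_{κ} q(Γ̃,κ)·A_{Γ_{κ(1)},Γ'₁}⋯A_{Γ_{κ(n)},Γ'_n}`. -/
def Rfun (q : Fin (2 * d) → Fin (2 * d) → Kˣ) {n : ℕ} (Γ Γ' : Fin n → Yp d) :
    Mq (K := K) q :=
  ∑ κ : Equiv.Perm (Fin n),
    ((qPerm q (fun i => (Γ i).1) κ : Kˣ) : K) •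
      (List.ofFn fun i => Amat q (Γ (κ i)) (Γ' i)).prod
open scoped TensorProduct

/-- Relations for the truncation `E_{≤N}`: kill `ℏ_Γ` for `|Γ| > N`. -/
inductive ENrel (q : Fin (2 * d) → Fin (2 * d) → Kˣ) (N : ℕ) :
    E (K := K) q → E (K := K) q → Prop
  | rel (Γ : M d) : N < leaves Γ → ENrel q N (hbar q Γ) 0

/-- The truncation `E_{≤N}` of the bracketing algebra. -/
abbrev EN (q : Fin (2 * d) → Fin (2 * d) → Kˣ) (N : ℕ) :=
  RingQuot (ENrel (K := K) q N)

/-- The image of `ℏ_Γ` in the truncation `E_{≤N}`. -/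
def hbarN (q : Fin (2 * d) → Fin (2 * d) → Kˣ) (N : ℕ) (Γ : M d) : EN (K := K) q N :=
  RingQuot.mkAlgHom K (ENrel q N) (hbar q Γ)

/-- `Y⁺_{≤N}`: admissible trees with at most `N` leaves. -/
def YpN (d N : ℕ) := {Γ : M d // Yplus Γ ∧ leaves Γ ≤ N}
theorem _root_.Equiv.Perm.inv_apply_self {α : Type*} (f : Equiv.Perm α) (x : α) : f⁻¹ (f x) = x :=
  f.symm_apply_apply x

theorem _root_.Equiv.Perm.apply_inv_self {α : Type*} (f : Equiv.Perm α) (x : α) : f (f⁻¹ x) = x :=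
  f.apply_symm_apply x

attribute [-simp] Equiv.Perm.coe_inv
section Scalar

variable (q : Fin (2 * d) → Fin (2 * d) → Kˣ)

private lemma qL_mul (hq2 : ∀ i j, q i j * q j i = 1) :
    ∀ la lb : List (Fin (2 * d)),
      ((la.map fun i => (lb.map fun j => q i j).prod).prod) *
        ((lb.map fun j => (la.map fun i => q j i).prod).prod) = 1
  | [], lb => by simp
  | x :: t, lb => by
    have ih := qL_mul hq2 t lb
    have hsplit : (lb.map fun j => q j x * (t.map fun i => q j i).prod).prod
        = (lb.map fun j => q j x).prod *
            (lb.map fun j => (t.map fun i => q j i).prod).prod :=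
      List.prod_map_mul
    have hA : (lb.map fun j => q x j).prod * (lb.map fun j => q j x).prod = 1 := by
      rw [← List.prod_map_mul]
      refine List.prod_eq_one fun y hy => ?_
      obtain ⟨j, _, rfl⟩ := List.mem_map.1 hy
      exact hq2 x j
    simp only [List.map_cons, List.prod_cons]
    rw [hsplit, mul_mul_mul_comm, hA, ih, one_mul]

lemma qT_mul_symm (hq2 : ∀ i j, q i j * q j i = 1) (a b : M d) :
    qT q a b * qT q b a = 1 :=
  qL_mul q hq2 (leafList a) (leafList b)

lemma qT_symm (hq2 : ∀ i j, q i j * q j i = 1) (a b : M d) :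
    qT q b a = (qT q a b)⁻¹ :=
  eq_inv_of_mul_eq_one_right (qT_mul_symm q hq2 a b)

def Pset (n : ℕ) : Finset (Fin n × Fin n) :=
  Finset.univ.filter fun p => p.1 < p.2

lemma qPerm_eq_prod {n} (Γ : Fin n → M d) (σ : Equiv.Perm (Fin n)) :
    qPerm q Γ σ
      = ∏ p ∈ Pset n, if σ⁻¹ p.2 < σ⁻¹ p.1 then qT q (Γ p.1) (Γ p.2) else 1 := by
  rw [qPerm, Pset, ← Finset.prod_filter, Finset.filter_filter]
  simp only [Equiv.Perm.inv_def]

lemma qPerm_one {n} (Γ : Fin n → M d) : qPerm q Γ 1 = 1 := by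
  rw [qPerm_eq_prod]
  refine Finset.prod_eq_one fun p hp => ?_
  have hp' : p.1 < p.2 := by simpa [Pset] using hp
  simp [lt_asymm hp']

lemma qPerm_mul (hq2 : ∀ i j, q i j * q j i = 1) {n} (Γ : Fin n → M d)
    (κ σ : Equiv.Perm (Fin n)) :
    qPerm q (fun i => Γ (κ i)) σ * qPerm q Γ κ = qPerm q Γ (κ * σ) := by
  classical
  have hsymm : ∀ x y : Fin n, qT q (Γ y) (Γ x) = (qT q (Γ x) (Γ y))⁻¹ := fun x y =>
    qT_symm q hq2 _ _
  set g : Fin n × Fin n → Kˣ := fun p =>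
    if (κ * σ)⁻¹ p.2 < (κ * σ)⁻¹ p.1 then
      (if κ⁻¹ p.2 < κ⁻¹ p.1 then 1 else qT q (Γ p.1) (Γ p.2))
    else (if κ⁻¹ p.2 < κ⁻¹ p.1 then (qT q (Γ p.1) (Γ p.2))⁻¹ else 1) with hg
  have h1 : qPerm q (fun i => Γ (κ i)) σ = ∏ p ∈ Pset n, g p := by
    rw [qPerm_eq_prod]
    refine Finset.prod_nbij'
      (fun p => if κ p.1 < κ p.2 then (κ p.1, κ p.2) else (κ p.2, κ p.1))
      (fun p => if κ⁻¹ p.1 < κ⁻¹ p.2 then (κ⁻¹ p.1, κ⁻¹ p.2) else (κ⁻¹ p.2, κ⁻¹ p.1))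
      ?_ ?_ ?_ ?_ ?_
    · intro p hp
      have hp' : p.1 < p.2 := by simpa [Pset] using hp
      by_cases h : κ p.1 < κ p.2
      · simp [Pset, h]
      · have hne : κ p.2 ≠ κ p.1 := fun hEq => (ne_of_gt hp') (κ.injective hEq)
        have : κ p.2 < κ p.1 := (not_lt.1 h).lt_of_ne hne
        simp [Pset, h, this]
    · intro p hp
      have hp' : p.1 < p.2 := by simpa [Pset] using hp
      by_cases h : κ⁻¹ p.1 < κ⁻¹ p.2
      · simp [Pset, h]
      · have hne : κ⁻¹ p.2 ≠ κ⁻¹ p.1 := fun hEq => (ne_of_gt hp') (κ⁻¹.injective hEq)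
        have : κ⁻¹ p.2 < κ⁻¹ p.1 := (not_lt.1 h).lt_of_ne hne
        simp [Pset, h, this]
    · intro p hp
      have hp' : p.1 < p.2 := by simpa [Pset] using hp
      by_cases h : κ p.1 < κ p.2
      · simp [h, Equiv.Perm.inv_apply_self, hp']
      · simp [h, Equiv.Perm.inv_apply_self, lt_asymm hp']
    · intro p hp
      have hp' : p.1 < p.2 := by simpa [Pset] using hp
      by_cases h : κ⁻¹ p.1 < κ⁻¹ p.2
      · simp [h, Equiv.Perm.apply_inv_self, hp']
      · simp [h, Equiv.Perm.apply_inv_self, lt_asymm hp']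
    · intro p hp
      have hp' : p.1 < p.2 := by simpa [Pset] using hp
      by_cases h : κ p.1 < κ p.2
      · by_cases hσ : σ⁻¹ p.2 < σ⁻¹ p.1 <;>
          simp [hg, h, hσ, mul_inv_rev, Equiv.Perm.mul_apply,
            Equiv.Perm.inv_apply_self, lt_asymm hp']
      · have hps : p.1 ≠ p.2 := ne_of_lt hp'
        have hσne : σ⁻¹ p.1 ≠ σ⁻¹ p.2 := fun hEq => hps (σ⁻¹.injective hEq)
        rcases lt_or_gt_of_ne hσne with hσ | hσ
        · simp [hg, h, hσ, lt_asymm hσ, mul_inv_rev, Equiv.Perm.mul_apply,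
            Equiv.Perm.inv_apply_self, hp']
        · simp only [hg, h, hσ, lt_asymm hσ, mul_inv_rev, Equiv.Perm.mul_apply,
            Equiv.Perm.inv_apply_self, hp', if_true, if_false, ite_true, ite_false,
            if_neg (lt_asymm hσ), if_pos hp', if_neg (lt_asymm hp')]
          exact (hsymm _ _).symm ▸ rfl
  rw [h1, qPerm_eq_prod, qPerm_eq_prod, ← Finset.prod_mul_distrib]
  refine Finset.prod_congr rfl fun p hp => ?_
  by_cases hA : (κ * σ)⁻¹ p.2 < (κ * σ)⁻¹ p.1 <;>
    by_cases hB : κ⁻¹ p.2 < κ⁻¹ p.1 <;>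
      simp [hg, hA, hB]

end Scalar

section Scalar2

variable (q : Fin (2 * d) → Fin (2 * d) → Kˣ)

lemma swap_adj_lt {n : ℕ} {i j a b : Fin n} (hij : (i : ℕ) + 1 = j) (hab : a < b)
    (hne : ¬(a = i ∧ b = j)) : Equiv.swap i j a < Equiv.swap i j b := by
  have h1 : (a : ℕ) < b := hab
  rw [Fin.lt_def, Equiv.swap_apply_def, Equiv.swap_apply_def]
  split_ifs <;> simp only [Fin.ext_iff, not_and] at * <;> omega

lemma qPerm_swap {n : ℕ} (Γ : Fin n → M d) (i j : Fin n) (hij : (i : ℕ) + 1 = j) :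
    qPerm q Γ (Equiv.swap i j) = qT q (Γ i) (Γ j) := by
  rw [qPerm]
  have hfilter : (Finset.univ.filter fun p : Fin n × Fin n =>
      p.1 < p.2 ∧ (Equiv.swap i j).symm p.2 < (Equiv.swap i j).symm p.1) = {(i, j)} := by
    ext p
    rw [Finset.mem_filter]
    simp only [Finset.mem_filter, Finset.mem_univ, true_and, Finset.mem_singleton,
      Equiv.symm_swap]
    constructor
    · rintro ⟨h1, h2⟩
      by_contra hne
      have hne' : ¬(p.1 = i ∧ p.2 = j) := by
        rintro ⟨ha, hb⟩
        exact hne (by rw [Prod.ext_iff]; exact ⟨ha, hb⟩)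
      exact absurd (swap_adj_lt hij h1 hne') (lt_asymm h2)
    · rintro rfl
      constructor
      · show i < j
        rw [Fin.lt_def]; omega
      · show Equiv.swap i j j < Equiv.swap i j i
        rw [Equiv.swap_apply_left, Equiv.swap_apply_right, Fin.lt_def]
        omega
  rw [hfilter, Finset.prod_singleton]

def invC {n : ℕ} (τ : Equiv.Perm (Fin n)) : ℕ :=
  ((Pset n).filter fun p => τ p.2 < τ p.1).card

lemma eq_one_of_strictMono {n : ℕ} (τ : Equiv.Perm (Fin n))
    (hmono : ∀ a b : Fin n, a < b → τ a < τ b) : τ = 1 := by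
  have key : ∀ m : ℕ, ∀ i : Fin n, (i : ℕ) = m → τ i = i := by
    intro m
    induction m using Nat.strong_induction_on with
    | _ m ih =>
      intro i him
      obtain ⟨mm, hmm⟩ : ∃ mm, τ mm = i := ⟨τ⁻¹ i, Equiv.Perm.apply_inv_self τ i⟩
      rcases lt_trichotomy mm i with hlt | heq | hgt
      · have h1 : τ mm = mm := ih (mm : ℕ)
          (by have := Fin.lt_def.1 hlt; omega) mm rfl
        rw [h1] at hmm
        exact absurd hmm (ne_of_lt hlt)
      · exact heq ▸ hmm
      · have h1 : τ i < i := hmm ▸ hmono i mm hgt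
        have h2 : τ (τ i) = τ i := ih ((τ i : Fin n) : ℕ) (by
          have := (Fin.lt_def.1 h1); omega) (τ i) rfl
        have h3 : i = τ i := τ.injective h2.symm
        exact absurd h1 (by rw [← h3]; exact lt_irrefl i)
  exact Equiv.ext fun i => key (i : ℕ) i rfl

lemma eq_one_of_invC_zero {n : ℕ} (τ : Equiv.Perm (Fin n)) (h : invC τ = 0) : τ = 1 := by
  refine eq_one_of_strictMono τ fun a b hab => ?_
  have hnotmem : (a, b) ∉ (Pset n).filter fun p => τ p.2 < τ p.1 := by
    rw [invC, Finset.card_eq_zero] at h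
    simp [h]
  have h2 : ¬ τ b < τ a := by
    intro hc
    exact hnotmem (by simp [Pset, hab, hc])
  exact (not_lt.1 h2).lt_of_ne fun hEq => (ne_of_lt hab) (τ.injective hEq)

lemma exists_descent {n : ℕ} (τ : Equiv.Perm (Fin n)) (hτ : τ ≠ 1) :
    ∃ i j : Fin n, (i : ℕ) + 1 = (j : ℕ) ∧ τ j < τ i := by
  by_contra hcon
  push_neg at hcon
  apply hτ
  refine eq_one_of_strictMono τ ?_
  have hcons : ∀ i j : Fin n, (i : ℕ) + 1 = j → τ i < τ j := by
    intro i j hij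
    have h1 := hcon i j hij
    refine h1.lt_of_ne fun hEq => ?_
    have h2 := τ.injective hEq
    have := congrArg Fin.val h2
    omega
  intro a b hab
  have h1 : (a : ℕ) < b := hab
  obtain ⟨k, hk⟩ : ∃ k, (a : ℕ) + k + 1 = b := ⟨(b : ℕ) - a - 1, by omega⟩
  clear hab h1
  induction k generalizing b with
  | zero => exact hcons a b (by omega)
  | succ k ihk =>
    have hcn : (a : ℕ) + k + 1 < n := by have := b.isLt; omega
    set c : Fin n := ⟨(a : ℕ) + k + 1, hcn⟩ with hc
    exact lt_trans (ihk c (by simp [hc])) (hcons c b (by simp [hc]; omega))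

lemma invC_mul_swap_lt {n : ℕ} (τ : Equiv.Perm (Fin n)) (i j : Fin n)
    (hij : (i : ℕ) + 1 = j) (hdesc : τ j < τ i) :
    invC (τ * Equiv.swap i j) < invC τ := by
  classical
  set s := Equiv.swap i j with hs
  have hmem : (i, j) ∈ (Pset n).filter fun p => τ p.2 < τ p.1 := by
    simp only [Pset, Finset.mem_filter, Finset.mem_univ, true_and, Finset.filter_filter]
    exact ⟨by rw [Fin.lt_def]; omega, hdesc⟩
  have hcard : ((Pset n).filter fun p => (τ * s) p.2 < (τ * s) p.1).card
      ≤ (((Pset n).filter fun p => τ p.2 < τ p.1).erase (i, j)).card := by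
    apply Finset.card_le_card_of_injOn (fun p => (s p.1, s p.2))
    · intro p hp
      have hp2 : p.1 < p.2 ∧ τ (s p.2) < τ (s p.1) := by
        rw [Finset.mem_coe, Finset.mem_filter] at hp
        simpa [Pset, Equiv.Perm.mul_apply] using hp
      have hne : ¬(p.1 = i ∧ p.2 = j) := by
        rintro ⟨h1, h2⟩
        rw [h1, h2] at hp2
        rw [hs, Equiv.swap_apply_left, Equiv.swap_apply_right] at hp2
        exact absurd hp2.2 (lt_asymm hdesc)
      refine Finset.mem_erase.2 ⟨?_, ?_⟩
      · intro hEq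
        have h1 : s p.1 = i := congrArg Prod.fst hEq
        have h2 : s p.2 = j := congrArg Prod.snd hEq
        have h1' : p.1 = s i := by rw [← h1, hs, Equiv.swap_apply_self]
        have h2' : p.2 = s j := by rw [← h2, hs, Equiv.swap_apply_self]
        rw [hs, Equiv.swap_apply_left] at h1'
        rw [hs, Equiv.swap_apply_right] at h2'
        have := hp2.1
        rw [h1', h2', Fin.lt_def] at this
        omega
      · simp only [Pset, Finset.mem_filter, Finset.mem_univ, true_and]
        exact ⟨swap_adj_lt hij hp2.1 hne, hp2.2⟩
    · intro p hp r hr hEq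
      have h1 : s p.1 = s r.1 := congrArg Prod.fst hEq
      have h2 : s p.2 = s r.2 := congrArg Prod.snd hEq
      exact Prod.ext (s.injective h1) (s.injective h2)
  calc invC (τ * s) ≤ _ := hcard
    _ < invC τ := Finset.card_erase_lt_of_mem hmem

lemma Zfun_comp (hq2 : ∀ i j, q i j * q j i = 1) {n : ℕ} (Γ : Fin n → M d)
    (κ : Equiv.Perm (Fin n)) :
    Zfun (K := K) q Γ
      = ((qPerm q Γ κ : Kˣ) : K) ^ 2 * Zfun (K := K) q (fun i => Γ (κ i)) := by
  rw [Zfun, Zfun, Finset.mul_sum]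
  refine (Fintype.sum_equiv (Equiv.mulLeft κ)
    (fun σ => ((qPerm q Γ κ : Kˣ) : K) ^ 2 * ((qPerm q (fun i => Γ (κ i)) σ : Kˣ) : K) ^ 2)
    (fun σ => ((qPerm q Γ σ : Kˣ) : K) ^ 2) fun σ => ?_).symm
  have hc := qPerm_mul q hq2 Γ κ σ
  have hc' : ((qPerm q Γ (κ * σ) : Kˣ) : K)
      = ((qPerm q (fun i => Γ (κ i)) σ : Kˣ) : K) * ((qPerm q Γ κ : Kˣ) : K) := by
    rw [← hc, Units.val_mul]
  simp only [Equiv.coe_mulLeft]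
  rw [hc']
  ring

end Scalar2

section ListHelpers

lemma ofFn_prod_split {R : Type*} [Monoid R] {n : ℕ} (g : Fin n → R) (i j : Fin n)
    (hij : (i : ℕ) + 1 = j) :
    (List.ofFn g).prod
      = ((List.ofFn g).take (i : ℕ)).prod *
          (g i * (g j * ((List.ofFn g).drop ((j : ℕ) + 1)).prod)) := by
  conv_lhs => rw [← List.take_append_drop (i : ℕ) (List.ofFn g)]
  rw [List.prod_append]
  congr 1
  rw [List.drop_eq_getElem_cons (by simpa using i.isLt), List.prod_cons]
  congr 1
  · simp [List.getElem_ofFn]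
  rw [show (i : ℕ) + 1 = (j : ℕ) from hij]
  rw [List.drop_eq_getElem_cons (l := List.ofFn g) (i := (j : ℕ))
      (by simpa using j.isLt), List.prod_cons]
  congr 1
  simp [List.getElem_ofFn]

lemma ofFn_take_congr {R : Type*} {n : ℕ} (g h : Fin n → R) (m : ℕ)
    (hgh : ∀ x : Fin n, (x : ℕ) < m → g x = h x) :
    (List.ofFn g).take m = (List.ofFn h).take m := by
  apply List.ext_getElem (by simp)
  intro idx h1 h2
  have hidx : idx < m ∧ idx < n := by
    simpa [List.length_take, List.length_ofFn, lt_min_iff] using h1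
  simp only [List.getElem_take, List.getElem_ofFn]
  exact hgh ⟨idx, hidx.2⟩ hidx.1

lemma ofFn_drop_congr {R : Type*} {n : ℕ} (g h : Fin n → R) (m : ℕ)
    (hgh : ∀ x : Fin n, m ≤ (x : ℕ) → g x = h x) :
    (List.ofFn g).drop m = (List.ofFn h).drop m := by
  apply List.ext_getElem (by simp)
  intro idx h1 h2
  have h1' : idx < n - m := by simpa using h1
  have hidx : m + idx < n := by omega
  simp only [List.getElem_drop, List.getElem_ofFn]
  exact hgh ⟨m + idx, hidx⟩ (Nat.le_add_right m idx)

end ListHelpers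

section FieldHelpers

variable {K' : Type*} [Field K']

lemma smul_cancel {V : Type*} [AddCommMonoid V] [Module K' V] {c : K'} (hc : c ≠ 0)
    {x y : V} (h : c • x = c • y) : x = y := by
  have h2 := congrArg (fun z => c⁻¹ • z) h
  simpa [smul_smul, inv_mul_cancel₀ hc] using h2

lemma mid_helper {R : Type*} [Ring R] [Algebra K' R]
    (T D x1 y1 x2 y2 x3 y3 x4 y4 : R) (c e f : K')
    (hrel : x1 * y1 + e • (x2 * y2) = f • (x3 * y3 + e • (x4 * y4))) :
    c • (T * (x1 * (y1 * D))) + (e * c) • (T * (x2 * (y2 * D)))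
      = f • (c • (T * (x3 * (y3 * D))) + (e * c) • (T * (x4 * (y4 * D)))) := by
  have expand : ∀ (x y : R) (u : K'),
      u • (T * (x * (y * D))) = T * ((u • (x * y)) * D) := by
    intro x y u
    rw [smul_mul_assoc, mul_smul_comm, mul_assoc]
  have collect : ∀ (w1 w2 : R), c • w1 + (e * c) • w2 = c • (w1 + e • w2) := by
    intro w1 w2
    rw [smul_add, smul_smul, mul_comm c e]
  calc c • (T * (x1 * (y1 * D))) + (e * c) • (T * (x2 * (y2 * D)))
      = T * ((c • (x1 * y1)) * D) + T * (((e * c) • (x2 * y2)) * D) := by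
        rw [expand, expand]
    _ = T * ((c • (x1 * y1) + (e * c) • (x2 * y2)) * D) := by
        rw [← mul_add, ← add_mul]
    _ = T * ((c • (x1 * y1 + e • (x2 * y2))) * D) := by rw [collect]
    _ = T * ((c • (f • (x3 * y3 + e • (x4 * y4)))) * D) := by rw [hrel]
    _ = T * ((f • (c • (x3 * y3) + (e * c) • (x4 * y4))) * D) := by
        rw [smul_comm c f, collect]
    _ = f • (c • (T * (x3 * (y3 * D))) + (e * c) • (T * (x4 * (y4 * D)))) := by
        rw [expand, expand, ← mul_add, ← add_mul, smul_mul_assoc, mul_smul_comm]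

end FieldHelpers

section AlgebraCore

variable (q : Fin (2 * d) → Fin (2 * d) → Kˣ)

lemma rel1' (Γ₁ Γ₂ a b : Yp d) :
    Amat (K := K) q Γ₂ a * Amat (K := K) q Γ₁ b
        + ((qT q a.1 b.1 : Kˣ) : K) • (Amat (K := K) q Γ₂ b * Amat (K := K) q Γ₁ a)
      = ((qT q Γ₁.1 Γ₂.1 : Kˣ) : K) •
          (Amat (K := K) q Γ₁ a * Amat (K := K) q Γ₂ b
            + ((qT q a.1 b.1 : Kˣ) : K) • (Amat (K := K) q Γ₁ b * Amat (K := K) q Γ₂ a)) := by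
  have h := RingQuot.mkAlgHom_rel K (Mrel.rel1 (q := q) Γ₁ Γ₂ a b)
  simpa only [map_add, map_mul, map_smul, Amat] using h

lemma rel2' (Γ₁ Γ₂ a b : Yp d) :
    Amat (K := K) q Γ₁ b * Amat (K := K) q Γ₂ a
        + ((qT q Γ₁.1 Γ₂.1 : Kˣ) : K) • (Amat (K := K) q Γ₂ b * Amat (K := K) q Γ₁ a)
      = ((qT q a.1 b.1 : Kˣ) : K) •
          (Amat (K := K) q Γ₁ a * Amat (K := K) q Γ₂ b
            + ((qT q Γ₁.1 Γ₂.1 : Kˣ) : K) • (Amat (K := K) q Γ₂ a * Amat (K := K) q Γ₁ b)) := by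
  have h := RingQuot.mkAlgHom_rel K (Mrel.rel2 (q := q) Γ₁ Γ₂ a b)
  simpa only [map_add, map_mul, map_smul, Amat] using h

end AlgebraCore

section AlgebraField

variable {K : Type*} [Field K] (q : Fin (2 * d) → Fin (2 * d) → Kˣ)

lemma Lfun_adj (hq2 : ∀ i j, q i j * q j i = 1) (h2 : (2 : K) ≠ 0)
    {n : ℕ} (Δ Γ' : Fin n → Yp d) (i j : Fin n) (hij : (i : ℕ) + 1 = j) :
    Lfun (K := K) q (fun x => Δ (Equiv.swap i j x)) Γ'
      = ((qT q (Δ i).1 (Δ j).1 : Kˣ) : K) • Lfun (K := K) q Δ Γ' := by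
  classical
  apply smul_cancel h2
  rw [two_smul, two_smul, Lfun, Lfun]
  set s := Equiv.swap i j with hs
  have hsi : s i = j := Equiv.swap_apply_left i j
  have hsj : s j = i := Equiv.swap_apply_right i j
  have hfix : ∀ x : Fin n, (x : ℕ) < (i : ℕ) → s x = x := by
    intro x hx
    exact Equiv.swap_apply_of_ne_of_ne (Fin.ne_of_val_ne (by omega))
      (Fin.ne_of_val_ne (by omega))
  have hfix' : ∀ x : Fin n, (j : ℕ) + 1 ≤ (x : ℕ) → s x = x := by
    intro x hx
    exact Equiv.swap_apply_of_ne_of_ne (Fin.ne_of_val_ne (by omega))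
      (Fin.ne_of_val_ne (by omega))
  set c : K := ((qT q (Δ i).1 (Δ j).1 : Kˣ) : K) with hcdef
  set G : Equiv.Perm (Fin n) → Mq (K := K) q := fun κ =>
    ((qPerm q (fun x => (Γ' x).1) κ : Kˣ) : K) •
      (List.ofFn fun x => Amat (K := K) q (Δ (s x)) (Γ' (κ x))).prod with hG
  set H : Equiv.Perm (Fin n) → Mq (K := K) q := fun κ =>
    ((qPerm q (fun x => (Γ' x).1) κ : Kˣ) : K) •
      (List.ofFn fun x => Amat (K := K) q (Δ x) (Γ' (κ x))).prod with hH
  have hre : ∀ F : Equiv.Perm (Fin n) → Mq (K := K) q,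
      (∑ κ, F (κ * s)) = ∑ κ, F κ := fun F =>
    Fintype.sum_equiv (Equiv.mulRight s) (fun κ => F (κ * s)) F (fun κ => rfl)
  have keystep : ∀ κ : Equiv.Perm (Fin n), G κ + G (κ * s) = c • (H κ + H (κ * s)) := by
    intro κ
    have hswapPerm : qPerm q (fun x => (Γ' (κ x)).1) s
        = qT q (Γ' (κ i)).1 (Γ' (κ j)).1 := qPerm_swap q (fun x => (Γ' (κ x)).1) i j hij
    have hcoeff : ((qPerm q (fun x => (Γ' x).1) (κ * s) : Kˣ) : K)
        = ((qT q (Γ' (κ i)).1 (Γ' (κ j)).1 : Kˣ) : K) *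
            ((qPerm q (fun x => (Γ' x).1) κ : Kˣ) : K) := by
      rw [← qPerm_mul q hq2 (fun x => (Γ' x).1) κ s, Units.val_mul]
      congr 2
      all_goals exact qPerm_swap q (fun x => (Γ' (κ x)).1) i j hij
    simp only [hG, hH, Equiv.Perm.mul_apply, hcoeff]
    rw [ofFn_prod_split (fun x => Amat (K := K) q (Δ (s x)) (Γ' (κ x))) i j hij,
        ofFn_prod_split (fun x => Amat (K := K) q (Δ (s x)) (Γ' (κ (s x)))) i j hij,
        ofFn_prod_split (fun x => Amat (K := K) q (Δ x) (Γ' (κ x))) i j hij,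
        ofFn_prod_split (fun x => Amat (K := K) q (Δ x) (Γ' (κ (s x)))) i j hij]
    rw [ofFn_take_congr (fun x => Amat (K := K) q (Δ (s x)) (Γ' (κ x)))
          (fun x => Amat (K := K) q (Δ x) (Γ' (κ x))) (i : ℕ)
          (fun x hx => by simp only [hfix x hx]),
        ofFn_take_congr (fun x => Amat (K := K) q (Δ (s x)) (Γ' (κ (s x))))
          (fun x => Amat (K := K) q (Δ x) (Γ' (κ x))) (i : ℕ)
          (fun x hx => by simp only [hfix x hx]),
        ofFn_take_congr (fun x => Amat (K := K) q (Δ x) (Γ' (κ (s x))))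
          (fun x => Amat (K := K) q (Δ x) (Γ' (κ x))) (i : ℕ)
          (fun x hx => by simp only [hfix x hx]),
        ofFn_drop_congr (fun x => Amat (K := K) q (Δ (s x)) (Γ' (κ x)))
          (fun x => Amat (K := K) q (Δ x) (Γ' (κ x))) ((j : ℕ) + 1)
          (fun x hx => by simp only [hfix' x hx]),
        ofFn_drop_congr (fun x => Amat (K := K) q (Δ (s x)) (Γ' (κ (s x))))
          (fun x => Amat (K := K) q (Δ x) (Γ' (κ x))) ((j : ℕ) + 1)
          (fun x hx => by simp only [hfix' x hx]),
        ofFn_drop_congr (fun x => Amat (K := K) q (Δ x) (Γ' (κ (s x))))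
          (fun x => Amat (K := K) q (Δ x) (Γ' (κ x))) ((j : ℕ) + 1)
          (fun x hx => by simp only [hfix' x hx])]
    simp only [hsi, hsj]
    exact mid_helper _ _ _ _ _ _ _ _ _ _ _ _ _
      (rel1' q (Δ i) (Δ j) (Γ' (κ i)) (Γ' (κ j)))
  calc (∑ κ, G κ) + ∑ κ, G κ
      = (∑ κ, G κ) + ∑ κ, G (κ * s) := by rw [hre]
    _ = ∑ κ, (G κ + G (κ * s)) := Finset.sum_add_distrib.symm
    _ = ∑ κ, c • (H κ + H (κ * s)) := Finset.sum_congr rfl fun κ _ => keystep κ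
    _ = c • ∑ κ, (H κ + H (κ * s)) := (Finset.smul_sum).symm
    _ = c • ((∑ κ, H κ) + ∑ κ, H (κ * s)) := by rw [Finset.sum_add_distrib]
    _ = c • (∑ κ, H κ) + c • (∑ κ, H κ) := by rw [hre, smul_add]

end AlgebraField

section AlgebraField2

variable {K : Type*} [Field K] (q : Fin (2 * d) → Fin (2 * d) → Kˣ)

lemma Rfun_adj (hq2 : ∀ i j, q i j * q j i = 1) (h2 : (2 : K) ≠ 0)
    {n : ℕ} (Γ Θ : Fin n → Yp d) (i j : Fin n) (hij : (i : ℕ) + 1 = j) :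
    Rfun (K := K) q Γ (fun x => Θ (Equiv.swap i j x))
      = ((qT q (Θ i).1 (Θ j).1 : Kˣ) : K) • Rfun (K := K) q Γ Θ := by
  classical
  apply smul_cancel h2
  rw [two_smul, two_smul, Rfun, Rfun]
  set s := Equiv.swap i j with hs
  have hsi : s i = j := Equiv.swap_apply_left i j
  have hsj : s j = i := Equiv.swap_apply_right i j
  have hfix : ∀ x : Fin n, (x : ℕ) < (i : ℕ) → s x = x := by
    intro x hx
    exact Equiv.swap_apply_of_ne_of_ne (Fin.ne_of_val_ne (by omega))
      (Fin.ne_of_val_ne (by omega))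
  have hfix' : ∀ x : Fin n, (j : ℕ) + 1 ≤ (x : ℕ) → s x = x := by
    intro x hx
    exact Equiv.swap_apply_of_ne_of_ne (Fin.ne_of_val_ne (by omega))
      (Fin.ne_of_val_ne (by omega))
  set c : K := ((qT q (Θ i).1 (Θ j).1 : Kˣ) : K) with hcdef
  set G : Equiv.Perm (Fin n) → Mq (K := K) q := fun κ =>
    ((qPerm q (fun x => (Γ x).1) κ : Kˣ) : K) •
      (List.ofFn fun x => Amat (K := K) q (Γ (κ x)) (Θ (s x))).prod with hG
  set H : Equiv.Perm (Fin n) → Mq (K := K) q := fun κ =>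
    ((qPerm q (fun x => (Γ x).1) κ : Kˣ) : K) •
      (List.ofFn fun x => Amat (K := K) q (Γ (κ x)) (Θ x)).prod with hH
  have hre : ∀ F : Equiv.Perm (Fin n) → Mq (K := K) q,
      (∑ κ, F (κ * s)) = ∑ κ, F κ := fun F =>
    Fintype.sum_equiv (Equiv.mulRight s) (fun κ => F (κ * s)) F (fun κ => rfl)
  have keystep : ∀ κ : Equiv.Perm (Fin n), G κ + G (κ * s) = c • (H κ + H (κ * s)) := by
    intro κ
    have hcoeff : ((qPerm q (fun x => (Γ x).1) (κ * s) : Kˣ) : K)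
        = ((qT q (Γ (κ i)).1 (Γ (κ j)).1 : Kˣ) : K) *
            ((qPerm q (fun x => (Γ x).1) κ : Kˣ) : K) := by
      rw [← qPerm_mul q hq2 (fun x => (Γ x).1) κ s, Units.val_mul]
      congr 2
      all_goals exact qPerm_swap q (fun x => (Γ (κ x)).1) i j hij
    simp only [hG, hH, Equiv.Perm.mul_apply, hcoeff]
    rw [ofFn_prod_split (fun x => Amat (K := K) q (Γ (κ x)) (Θ (s x))) i j hij,
        ofFn_prod_split (fun x => Amat (K := K) q (Γ (κ (s x))) (Θ (s x))) i j hij,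
        ofFn_prod_split (fun x => Amat (K := K) q (Γ (κ x)) (Θ x)) i j hij,
        ofFn_prod_split (fun x => Amat (K := K) q (Γ (κ (s x))) (Θ x)) i j hij]
    rw [ofFn_take_congr (fun x => Amat (K := K) q (Γ (κ x)) (Θ (s x)))
          (fun x => Amat (K := K) q (Γ (κ x)) (Θ x)) (i : ℕ)
          (fun x hx => by simp only [hfix x hx]),
        ofFn_take_congr (fun x => Amat (K := K) q (Γ (κ (s x))) (Θ (s x)))
          (fun x => Amat (K := K) q (Γ (κ x)) (Θ x)) (i : ℕ)
          (fun x hx => by simp only [hfix x hx]),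
        ofFn_take_congr (fun x => Amat (K := K) q (Γ (κ (s x))) (Θ x))
          (fun x => Amat (K := K) q (Γ (κ x)) (Θ x)) (i : ℕ)
          (fun x hx => by simp only [hfix x hx]),
        ofFn_drop_congr (fun x => Amat (K := K) q (Γ (κ x)) (Θ (s x)))
          (fun x => Amat (K := K) q (Γ (κ x)) (Θ x)) ((j : ℕ) + 1)
          (fun x hx => by simp only [hfix' x hx]),
        ofFn_drop_congr (fun x => Amat (K := K) q (Γ (κ (s x))) (Θ (s x)))
          (fun x => Amat (K := K) q (Γ (κ x)) (Θ x)) ((j : ℕ) + 1)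
          (fun x hx => by simp only [hfix' x hx]),
        ofFn_drop_congr (fun x => Amat (K := K) q (Γ (κ (s x))) (Θ x))
          (fun x => Amat (K := K) q (Γ (κ x)) (Θ x)) ((j : ℕ) + 1)
          (fun x hx => by simp only [hfix' x hx])]
    simp only [hsi, hsj]
    exact mid_helper _ _ _ _ _ _ _ _ _ _ _ _ _
      (rel2' q (Γ (κ i)) (Γ (κ j)) (Θ i) (Θ j))
  calc (∑ κ, G κ) + ∑ κ, G κ
      = (∑ κ, G κ) + ∑ κ, G (κ * s) := by rw [hre]
    _ = ∑ κ, (G κ + G (κ * s)) := Finset.sum_add_distrib.symm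
    _ = ∑ κ, c • (H κ + H (κ * s)) := Finset.sum_congr rfl fun κ _ => keystep κ
    _ = c • ∑ κ, (H κ + H (κ * s)) := (Finset.smul_sum).symm
    _ = c • ((∑ κ, H κ) + ∑ κ, H (κ * s)) := by rw [Finset.sum_add_distrib]
    _ = c • (∑ κ, H κ) + c • (∑ κ, H κ) := by rw [hre, smul_add]

lemma Lfun_perm (hq2 : ∀ i j, q i j * q j i = 1) (h2 : (2 : K) ≠ 0)
    {n : ℕ} (Γ Γ' : Fin n → Yp d) (τ : Equiv.Perm (Fin n)) :
    Lfun (K := K) q (fun x => Γ (τ x)) Γ'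
      = ((qPerm q (fun x => (Γ x).1) τ : Kˣ) : K) • Lfun (K := K) q Γ Γ' := by
  classical
  suffices H : ∀ m : ℕ, ∀ τ : Equiv.Perm (Fin n), invC τ = m →
      Lfun (K := K) q (fun x => Γ (τ x)) Γ'
        = ((qPerm q (fun x => (Γ x).1) τ : Kˣ) : K) • Lfun (K := K) q Γ Γ' from
    H (invC τ) τ rfl
  intro m
  induction m using Nat.strong_induction_on with
  | _ m ih =>
    intro τ hm
    by_cases h1 : τ = 1
    · subst h1
      simp only [Equiv.Perm.coe_one, id_eq, qPerm_one, Units.val_one, one_smul]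
    · obtain ⟨i, j, hij, hdesc⟩ := exists_descent τ h1
      have hss : (fun x => Γ ((τ * Equiv.swap i j) (Equiv.swap i j x)))
          = fun x => Γ (τ x) := by
        funext x
        simp [Equiv.Perm.mul_apply, Equiv.swap_apply_self]
      have hadj := Lfun_adj q hq2 h2 (fun x => Γ ((τ * Equiv.swap i j) x)) Γ' i j hij
      rw [hss] at hadj
      have ihτ := ih (invC (τ * Equiv.swap i j))
        (hm ▸ invC_mul_swap_lt τ i j hij hdesc) (τ * Equiv.swap i j) rfl
      rw [hadj, ihτ, smul_smul]
      congr 1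
      have hc := qPerm_mul q hq2 (fun x => (Γ x).1) (τ * Equiv.swap i j) (Equiv.swap i j)
      have hswap : qPerm q (fun x => (Γ ((τ * Equiv.swap i j) x)).1) (Equiv.swap i j)
          = qT q (Γ ((τ * Equiv.swap i j) i)).1 (Γ ((τ * Equiv.swap i j) j)).1 :=
        qPerm_swap q _ i j hij
      have hτs : τ * Equiv.swap i j * Equiv.swap i j = τ := by
        rw [mul_assoc, Equiv.swap_mul_self, mul_one]
      rw [hτs] at hc
      rw [← hc, Units.val_mul]
      congr 2
      exact hswap.symm
  
lemma Rfun_perm (hq2 : ∀ i j, q i j * q j i = 1) (h2 : (2 : K) ≠ 0)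
    {n : ℕ} (Γ Γ' : Fin n → Yp d) (τ : Equiv.Perm (Fin n)) :
    Rfun (K := K) q Γ (fun x => Γ' (τ x))
      = ((qPerm q (fun x => (Γ' x).1) τ : Kˣ) : K) • Rfun (K := K) q Γ Γ' := by
  classical
  suffices H : ∀ m : ℕ, ∀ τ : Equiv.Perm (Fin n), invC τ = m →
      Rfun (K := K) q Γ (fun x => Γ' (τ x))
        = ((qPerm q (fun x => (Γ' x).1) τ : Kˣ) : K) • Rfun (K := K) q Γ Γ' from
    H (invC τ) τ rfl
  intro m
  induction m using Nat.strong_induction_on with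
  | _ m ih =>
    intro τ hm
    by_cases h1 : τ = 1
    · subst h1
      simp only [Equiv.Perm.coe_one, id_eq, qPerm_one, Units.val_one, one_smul]
    · obtain ⟨i, j, hij, hdesc⟩ := exists_descent τ h1
      have hss : (fun x => Γ' ((τ * Equiv.swap i j) (Equiv.swap i j x)))
          = fun x => Γ' (τ x) := by
        funext x
        simp [Equiv.Perm.mul_apply, Equiv.swap_apply_self]
      have hadj := Rfun_adj q hq2 h2 Γ (fun x => Γ' ((τ * Equiv.swap i j) x)) i j hij
      rw [hss] at hadj
      have ihτ := ih (invC (τ * Equiv.swap i j))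
        (hm ▸ invC_mul_swap_lt τ i j hij hdesc) (τ * Equiv.swap i j) rfl
      rw [hadj, ihτ, smul_smul]
      congr 1
      have hc := qPerm_mul q hq2 (fun x => (Γ' x).1) (τ * Equiv.swap i j) (Equiv.swap i j)
      have hswap : qPerm q (fun x => (Γ' ((τ * Equiv.swap i j) x)).1) (Equiv.swap i j)
          = qT q (Γ' ((τ * Equiv.swap i j) i)).1 (Γ' ((τ * Equiv.swap i j) j)).1 :=
        qPerm_swap q _ i j hij
      have hτs : τ * Equiv.swap i j * Equiv.swap i j = τ := by
        rw [mul_assoc, Equiv.swap_mul_self, mul_one]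
      rw [hτs] at hc
      rw [← hc, Units.val_mul]
      congr 2
      exact hswap.symm

lemma master (hq2 : ∀ i j, q i j * q j i = 1) (h2 : (2 : K) ≠ 0)
    {n : ℕ} (Γ Γ' : Fin n → Yp d) :
    Zfun (K := K) q (fun x => (Γ' x).1) • Rfun (K := K) q Γ Γ'
      = Zfun (K := K) q (fun x => (Γ x).1) • Lfun (K := K) q Γ Γ' := by
  classical
  rw [Zfun, Zfun, Finset.sum_smul, Finset.sum_smul]
  have hRside : ∀ κ : Equiv.Perm (Fin n),
      ((qPerm q (fun x => (Γ' x).1) κ : Kˣ) : K) ^ 2 • Rfun (K := K) q Γ Γ'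
        = ∑ τ : Equiv.Perm (Fin n),
            (((qPerm q (fun x => (Γ x).1) τ : Kˣ) : K) *
              ((qPerm q (fun x => (Γ' x).1) κ : Kˣ) : K)) •
              (List.ofFn fun x => Amat (K := K) q (Γ (τ x)) (Γ' (κ x))).prod := by
    intro κ
    rw [sq, mul_smul, ← Rfun_perm q hq2 h2 Γ Γ' κ, Rfun, Finset.smul_sum]
    refine Finset.sum_congr rfl fun τ _ => ?_
    rw [smul_smul, mul_comm]
  have hLside : ∀ τ : Equiv.Perm (Fin n),
      ((qPerm q (fun x => (Γ x).1) τ : Kˣ) : K) ^ 2 • Lfun (K := K) q Γ Γ'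
        = ∑ κ : Equiv.Perm (Fin n),
            (((qPerm q (fun x => (Γ x).1) τ : Kˣ) : K) *
              ((qPerm q (fun x => (Γ' x).1) κ : Kˣ) : K)) •
              (List.ofFn fun x => Amat (K := K) q (Γ (τ x)) (Γ' (κ x))).prod := by
    intro τ
    rw [sq, mul_smul, ← Lfun_perm q hq2 h2 Γ Γ' τ, Lfun, Finset.smul_sum]
    refine Finset.sum_congr rfl fun κ _ => ?_
    rw [smul_smul]
  rw [Finset.sum_congr rfl fun κ _ => hRside κ, Finset.sum_congr rfl fun τ _ => hLside τ]
  exact Finset.sum_comm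

end AlgebraField2

section KeyLemmas

variable {K : Type*} [Field K] (q : Fin (2 * d) → (Fin (2 * d)) → Kˣ)

lemma coeff_reindex (hq2 : ∀ i j, q i j * q j i = 1)
    {n : ℕ} (hZ : ∀ Γ : Fin n → M d, Zfun (K := K) q Γ ≠ 0)
    (Γ : Fin n → M d) (κ : Equiv.Perm (Fin n)) :
    ((qPerm q (fun x => Γ (κ x)) κ⁻¹ : Kˣ) : K) / Zfun (K := K) q (fun x => Γ (κ x))
      = ((qPerm q Γ κ : Kˣ) : K) / Zfun (K := K) q Γ := by
  have h1 : qPerm q (fun x => Γ (κ x)) κ⁻¹ * qPerm q Γ κ = 1 := by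
    rw [qPerm_mul q hq2 Γ κ κ⁻¹, mul_inv_cancel, qPerm_one]
  have h2 : qPerm q (fun x => Γ (κ x)) κ⁻¹ = (qPerm q Γ κ)⁻¹ :=
    eq_inv_of_mul_eq_one_left h1
  rw [h2, Zfun_comp q hq2 Γ κ, Units.val_inv_eq_inv_val]
  have hZ' := hZ (fun x => Γ (κ x))
  have hu : ((qPerm q Γ κ : Kˣ) : K) ≠ 0 := Units.ne_zero _
  field_simp

lemma key_exchange (hq2 : ∀ i j, q i j * q j i = 1) (h2 : (2 : K) ≠ 0)
    {n : ℕ} (hZ : ∀ Γ : Fin n → M d, Zfun (K := K) q Γ ≠ 0)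
    (Γ Γ' : Fin n → Yp d) :
    (∑ σ : Equiv.Perm (Fin n),
        (((qPerm q (fun x => (Γ x).1) σ : Kˣ) : K) / Zfun (K := K) q (fun x => (Γ x).1)) •
          (List.ofFn fun x => Amat (K := K) q (Γ (σ x)) (Γ' x)).prod)
      = ∑ σ : Equiv.Perm (Fin n),
          (((qPerm q (fun x => (Γ' x).1) σ : Kˣ) : K) / Zfun (K := K) q (fun x => (Γ' x).1)) •
            (List.ofFn fun x => Amat (K := K) q (Γ x) (Γ' (σ x))).prod := by
  have hZ1 := hZ (fun x => (Γ x).1)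
  have hZ2 := hZ (fun x => (Γ' x).1)
  have lhs_eq : (∑ σ : Equiv.Perm (Fin n),
      (((qPerm q (fun x => (Γ x).1) σ : Kˣ) : K) / Zfun (K := K) q (fun x => (Γ x).1)) •
        (List.ofFn fun x => Amat (K := K) q (Γ (σ x)) (Γ' x)).prod)
      = (Zfun (K := K) q (fun x => (Γ x).1))⁻¹ • Rfun (K := K) q Γ Γ' := by
    rw [Rfun, Finset.smul_sum]
    refine Finset.sum_congr rfl fun σ _ => ?_
    rw [div_eq_inv_mul, mul_smul]
  have rhs_eq : (∑ σ : Equiv.Perm (Fin n),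
      (((qPerm q (fun x => (Γ' x).1) σ : Kˣ) : K) / Zfun (K := K) q (fun x => (Γ' x).1)) •
        (List.ofFn fun x => Amat (K := K) q (Γ x) (Γ' (σ x))).prod)
      = (Zfun (K := K) q (fun x => (Γ' x).1))⁻¹ • Lfun (K := K) q Γ Γ' := by
    rw [Lfun, Finset.smul_sum]
    refine Finset.sum_congr rfl fun σ _ => ?_
    rw [div_eq_inv_mul, mul_smul]
  rw [lhs_eq, rhs_eq]
  have hm := master q hq2 h2 Γ Γ'
  calc (Zfun (K := K) q (fun x => (Γ x).1))⁻¹ • Rfun (K := K) q Γ Γ'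
      = (Zfun (K := K) q (fun x => (Γ x).1))⁻¹ •
          ((Zfun (K := K) q (fun x => (Γ' x).1))⁻¹ •
            (Zfun (K := K) q (fun x => (Γ' x).1) • Rfun (K := K) q Γ Γ')) := by
        rw [inv_smul_smul₀ hZ2]
    _ = (Zfun (K := K) q (fun x => (Γ x).1))⁻¹ •
          ((Zfun (K := K) q (fun x => (Γ' x).1))⁻¹ •
            (Zfun (K := K) q (fun x => (Γ x).1) • Lfun (K := K) q Γ Γ')) := by rw [hm]
    _ = (Zfun (K := K) q (fun x => (Γ' x).1))⁻¹ • Lfun (K := K) q Γ Γ' := by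
        rw [smul_smul, smul_smul]
        congr 1
        field_simp

end KeyLemmas

section SumReindex

lemma sum_reindex {F : Type*} [Fintype F] {T : Type*} [AddCommMonoid T] {n : ℕ}
    (H : (Fin n → F) → Equiv.Perm (Fin n) → T) :
    (∑ Γ' : Fin n → F, ∑ σ : Equiv.Perm (Fin n), H Γ' σ)
      = ∑ Δ : Fin n → F, ∑ σ : Equiv.Perm (Fin n), H (fun x => Δ (σ x)) σ⁻¹ := by
  classical
  rw [Finset.sum_comm]
  conv_rhs => rw [Finset.sum_comm]
  refine Fintype.sum_equiv (Equiv.inv (Equiv.Perm (Fin n)))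
    (fun σ => ∑ Γ' : Fin n → F, H Γ' σ)
    (fun σ => ∑ Δ : Fin n → F, H (fun x => Δ (σ x)) σ⁻¹) fun σ => ?_
  simp only [Equiv.inv_apply, inv_inv]
  refine Fintype.sum_bijective (fun (Γ' : Fin n → F) => fun x => Γ' (σ x))
    ?_ _ _ fun Γ' => ?_
  · refine Function.bijective_iff_has_inverse.2
      ⟨fun Δ => fun x => Δ (σ⁻¹ x), fun Δ => ?_, fun Δ => ?_⟩
    · funext x; simp [Equiv.Perm.apply_inv_self]
    · funext x; simp [Equiv.Perm.inv_apply_self]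
  · congr 1
    funext x
    simp [Equiv.Perm.apply_inv_self]

end SumReindex

section Finiteness

lemma one_le_leaves {α : Type*} (Γ : FreeMagma α) : 1 ≤ leaves Γ := by
  induction Γ <;> (simp only [leaves]; omega)

private def embM (d N : ℕ) :
    {Γ : M d // leaves Γ ≤ N + 1} →
      Fin (2 * d) ⊕ ({Γ : M d // leaves Γ ≤ N} × {Γ : M d // leaves Γ ≤ N})
  | ⟨FreeMagma.of i, _⟩ => Sum.inl i
  | ⟨FreeMagma.mul a b, h⟩ =>
      Sum.inr (⟨a, by
        have hb := one_le_leaves b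
        simp only [leaves] at h
        omega⟩, ⟨b, by
        have ha := one_le_leaves a
        simp only [leaves] at h
        omega⟩)

lemma finite_leaves_le (d N : ℕ) : Finite {Γ : M d // leaves Γ ≤ N} := by
  induction N with
  | zero =>
    have hempty : IsEmpty {Γ : M d // leaves Γ ≤ 0} :=
      ⟨fun ⟨Γ, h⟩ => by have := one_le_leaves Γ; omega⟩
    exact Finite.of_subsingleton
  | succ N ihN =>
    haveI := ihN
    refine Finite.of_injective (embM d N) ?_
    rintro ⟨x, hx⟩ ⟨y, hy⟩ hxy
    cases x <;> cases y <;> simp_all [embM]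

lemma finite_YpN (d N : ℕ) : Finite (YpN d N) := by
  haveI := finite_leaves_le d N
  refine Finite.of_injective
    (fun x : YpN d N => (⟨x.1, x.2.2⟩ : {Γ : M d // leaves Γ ≤ N})) ?_
  rintro ⟨x, hx⟩ ⟨y, hy⟩ hxy
  simp_all [YpN]

end Finiteness

section TwoNeZero

variable {K : Type*} [Field K] (q : Fin (2 * d) → Fin (2 * d) → Kˣ)

lemma two_ne_zero'' (hd : 1 ≤ d) (hq2 : ∀ i j, q i j * q j i = 1)
    (hZ : ∀ (n : ℕ) (Γ : Fin n → M d), Zfun (K := K) q Γ ≠ 0) : (2 : K) ≠ 0 := by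
  have i0 : Fin (2 * d) := ⟨0, by omega⟩
  have h := hZ 2 (fun _ => FreeMagma.of i0)
  have hone : ∀ σ : Equiv.Perm (Fin 2),
      ((qPerm q (fun _ : Fin 2 => (FreeMagma.of i0 : M d)) σ : Kˣ) : K) ^ 2 = 1 := by
    intro σ
    have hpow : (qPerm q (fun _ : Fin 2 => (FreeMagma.of i0 : M d)) σ) ^ 2 = 1 := by
      rw [qPerm, ← Finset.prod_pow]
      refine Finset.prod_eq_one fun p hp => ?_
      rw [sq]
      exact qT_mul_symm q hq2 _ _
    calc ((qPerm q (fun _ : Fin 2 => (FreeMagma.of i0 : M d)) σ : Kˣ) : K) ^ 2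
        = (((qPerm q (fun _ : Fin 2 => (FreeMagma.of i0 : M d)) σ) ^ 2 : Kˣ) : K) := by
          rw [Units.val_pow_eq_pow_val]
      _ = 1 := by rw [hpow, Units.val_one]
  have hzval : Zfun (K := K) q (fun _ : Fin 2 => (FreeMagma.of i0 : M d)) = 2 := by
    rw [Zfun, Finset.sum_congr rfl fun σ _ => hone σ]
    simp [Finset.card_univ, Fintype.card_perm, Fintype.card_fin, Nat.factorial]
  rw [hzval] at h
  exact h

end TwoNeZero


set_option maxHeartbeats 1600000 in
/-- the q-Weyl coefficients `C_{Γ̃}(σ) = q(Γ̃,σ)/Z_n(Γ̃)` satisfy the left and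
right affine coequivariance conditions in `𝕄 ⊗ E_{≤N}` and `E_{≤N} ⊗ 𝕄` respectively. -/
theorem statement15 (d : ℕ) (hd : 1 ≤ d) (K : Type*) [Field K]
    (q : Fin (2 * d) → Fin (2 * d) → Kˣ)
    (hq1 : ∀ i, q i i = 1) (hq2 : ∀ i j, q i j * q j i = 1)
    (hZ : ∀ (n : ℕ) (Γ : Fin n → M d), Zfun (K := K) q Γ ≠ 0)
    (N : ℕ) (hN : 1 ≤ N) (n : ℕ) (hn : 1 ≤ n) (Γ : Fin n → YpN d N) :
    (∑ᶠ Γ' : Fin n → YpN d N, ∑ σ : Equiv.Perm (Fin n),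
        (((qPerm q (fun i => (Γ' i).1) σ : Kˣ) : K) /
            Zfun (K := K) q (fun i => (Γ' i).1)) •
          ((List.ofFn fun i =>
              Amat (K := K) q ⟨(Γ i).1, (Γ i).2.1⟩ ⟨(Γ' i).1, (Γ' i).2.1⟩).prod
            ⊗ₜ[K] (List.ofFn fun i => hbarN (K := K) q N (Γ' (σ i)).1).prod) =
      ∑ᶠ Γ' : Fin n → YpN d N, ∑ σ : Equiv.Perm (Fin n),
        (((qPerm q (fun i => (Γ i).1) σ : Kˣ) : K) /
            Zfun (K := K) q (fun i => (Γ i).1)) •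
          ((List.ofFn fun i =>
              Amat (K := K) q ⟨(Γ (σ i)).1, (Γ (σ i)).2.1⟩ ⟨(Γ' i).1, (Γ' i).2.1⟩).prod
            ⊗ₜ[K] (List.ofFn fun i => hbarN (K := K) q N (Γ' i).1).prod)) ∧
    (∑ᶠ Γ' : Fin n → YpN d N, ∑ σ : Equiv.Perm (Fin n),
        (((qPerm q (fun i => (Γ' i).1) σ : Kˣ) : K) /
            Zfun (K := K) q (fun i => (Γ' i).1)) •
          ((List.ofFn fun i => hbarN (K := K) q N (Γ' (σ i)).1).prod
            ⊗ₜ[K] (List.ofFn fun i =>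
              Amat (K := K) q ⟨(Γ' i).1, (Γ' i).2.1⟩ ⟨(Γ i).1, (Γ i).2.1⟩).prod) =
      ∑ᶠ Γ' : Fin n → YpN d N, ∑ σ : Equiv.Perm (Fin n),
        (((qPerm q (fun i => (Γ i).1) σ : Kˣ) : K) /
            Zfun (K := K) q (fun i => (Γ i).1)) •
          ((List.ofFn fun i => hbarN (K := K) q N (Γ' i).1).prod
            ⊗ₜ[K] (List.ofFn fun i =>
              Amat (K := K) q ⟨(Γ' i).1, (Γ' i).2.1⟩ ⟨(Γ (σ i)).1, (Γ (σ i)).2.1⟩).prod)) := by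
  classical
  haveI : Finite (YpN d N) := finite_YpN d N
  haveI : Fintype (YpN d N) := Fintype.ofFinite _
  have h2 : (2 : K) ≠ 0 := two_ne_zero'' q hd hq2 hZ
  have pull1 : ∀ (f : Equiv.Perm (Fin n) → Mq (K := K) q)
      (cs : Equiv.Perm (Fin n) → K) (y : EN (K := K) q N),
      ∑ σ : Equiv.Perm (Fin n), cs σ • (f σ ⊗ₜ[K] y)
        = (∑ σ : Equiv.Perm (Fin n), cs σ • f σ) ⊗ₜ[K] y := by
    intro f cs y
    rw [TensorProduct.sum_tmul]
    exact Finset.sum_congr rfl fun σ _ => (TensorProduct.smul_tmul' _ _ _).symm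
  have pull2 : ∀ (f : Equiv.Perm (Fin n) → Mq (K := K) q)
      (cs : Equiv.Perm (Fin n) → K) (y : EN (K := K) q N),
      ∑ σ : Equiv.Perm (Fin n), cs σ • (y ⊗ₜ[K] f σ)
        = y ⊗ₜ[K] (∑ σ : Equiv.Perm (Fin n), cs σ • f σ) := by
    intro f cs y
    rw [TensorProduct.tmul_sum]
    refine Finset.sum_congr rfl fun σ _ => ?_
    rw [TensorProduct.tmul_smul]
  constructor
  · rw [finsum_eq_sum_of_fintype, finsum_eq_sum_of_fintype]
    symm
    refine Eq.trans (Finset.sum_congr rfl fun Γ' _ => ?_)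
      (Eq.trans (sum_reindex (fun (Γ'' : Fin n → YpN d N) (σ : Equiv.Perm (Fin n)) =>
        (((qPerm q (fun i => (Γ'' i).1) σ : Kˣ) : K) /
            Zfun (K := K) q (fun i => (Γ'' i).1)) •
          ((List.ofFn fun i =>
              Amat (K := K) q ⟨(Γ i).1, (Γ i).2.1⟩ ⟨(Γ'' (σ i)).1, (Γ'' (σ i)).2.1⟩).prod
            ⊗ₜ[K] (List.ofFn fun i => hbarN (K := K) q N (Γ'' i).1).prod)))
        (Finset.sum_congr rfl fun Δ _ => Finset.sum_congr rfl fun σ _ => ?_))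
    · refine (pull1 _ _ _).trans (Eq.trans ?_ (pull1 _ _ _).symm)
      exact congrArg (fun z => z ⊗ₜ[K] (List.ofFn fun i => hbarN (K := K) q N (Γ' i).1).prod)
        (key_exchange q hq2 h2 (hZ n)
          (fun i => (⟨(Γ i).1, (Γ i).2.1⟩ : Yp d))
          (fun i => (⟨(Γ' i).1, (Γ' i).2.1⟩ : Yp d)))
    · simp only [Equiv.Perm.apply_inv_self]
      rw [coeff_reindex q hq2 (hZ n) (fun i => (Δ i).1) σ]
  · rw [finsum_eq_sum_of_fintype, finsum_eq_sum_of_fintype]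
    symm
    refine Eq.trans (Finset.sum_congr rfl fun Γ' _ => ?_)
      (Eq.trans (sum_reindex (fun (Γ'' : Fin n → YpN d N) (σ : Equiv.Perm (Fin n)) =>
        (((qPerm q (fun i => (Γ'' i).1) σ : Kˣ) : K) /
            Zfun (K := K) q (fun i => (Γ'' i).1)) •
          ((List.ofFn fun i => hbarN (K := K) q N (Γ'' i).1).prod
            ⊗ₜ[K] (List.ofFn fun i =>
              Amat (K := K) q ⟨(Γ'' (σ i)).1, (Γ'' (σ i)).2.1⟩ ⟨(Γ i).1, (Γ i).2.1⟩).prod)))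
        (Finset.sum_congr rfl fun Δ _ => Finset.sum_congr rfl fun σ _ => ?_))
    · refine (pull2 _ _ _).trans (Eq.trans ?_ (pull2 _ _ _).symm)
      refine congrArg (fun z =>
        (List.ofFn fun i => hbarN (K := K) q N (Γ' i).1).prod ⊗ₜ[K] z) ?_
      exact (key_exchange q hq2 h2 (hZ n)
        (fun i => (⟨(Γ' i).1, (Γ' i).2.1⟩ : Yp d))
        (fun i => (⟨(Γ i).1, (Γ i).2.1⟩ : Yp d))).symm
    · simp only [Equiv.Perm.apply_inv_self]
      rw [coeff_reindex q hq2 (hZ n) (fun i => (Δ i).1) σ]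


end NC
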